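/- Let 0 < α < 1 and n ≥ 1 a natural number. Then n * ∫₀¹ (1-t)^(-α) * t^(n-1) dt = n * Γ(1-α) * Γ(n) / Γ(n+1-α), and this quantity is at least Γ(1-α) * n^α. -/
import Mathlib

open Real

theorem stmt_4 (α : ℝ) (hα0 : 0 < α) (hα1 : α < 1) (n : ℕ) (hn : 1 ≤ n) :
    (n : ℝ) * ∫ t in (0:ℝ)..1, (1 - t) ^ (-α) * t ^ (n - 1) =
      (n : ℝ) * Real.Gamma (1 - α) * Real.Gamma n / Real.Gamma (n + 1 - α) ∧
    Real.Gamma (1 - α) * (n : ℝ) ^ α ≤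
      (n : ℝ) * ∫ t in (0:ℝ)..1, (1 - t) ^ (-α) * t ^ (n - 1) := by
  have hN0 : (0:ℝ) < n := by exact_mod_cast hn
  have hGa : 0 < Real.Gamma (1 - α) := Real.Gamma_pos_of_pos (by linarith)
  have hGn : 0 < Real.Gamma n := Real.Gamma_pos_of_pos hN0
  have hGn1 : 0 < Real.Gamma ((n:ℝ) + 1) := Real.Gamma_pos_of_pos (by linarith)
  have hGna : 0 < Real.Gamma ((n:ℝ) + 1 - α) := Real.Gamma_pos_of_pos (by linarith)
  have hrec : Real.Gamma ((n:ℝ) + 1) = n * Real.Gamma n := Real.Gamma_add_one hN0.ne'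
  -- integral = beta
  have hInt : ((∫ t in (0:ℝ)..1, (1 - t) ^ (-α) * t ^ (n - 1) : ℝ) : ℂ) =
      Complex.betaIntegral (n:ℂ) ((1-α : ℝ):ℂ) := by
    rw [Complex.betaIntegral, ← intervalIntegral.integral_ofReal]
    apply intervalIntegral.integral_congr
    intro x hx
    rw [Set.uIcc_of_le (by norm_num : (0:ℝ) ≤ 1)] at hx
    have h1 : ((n:ℂ)) - 1 = ((n - 1 : ℕ) : ℂ) := by
      push_cast [Nat.cast_sub hn]; ring
    have h2 : ((1-α : ℝ):ℂ) - 1 = ((-α : ℝ) : ℂ) := by push_cast; ring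
    simp only [h1, h2, Complex.cpow_natCast]
    rw [← Complex.ofReal_one, ← Complex.ofReal_sub, ← Complex.ofReal_cpow (by linarith [hx.2]),
      ← Complex.ofReal_pow, ← Complex.ofReal_mul, mul_comm]
  have hBeta : Complex.Gamma (n:ℂ) * Complex.Gamma ((1-α:ℝ):ℂ) =
      Complex.Gamma ((n:ℂ) + ((1-α:ℝ):ℂ)) * Complex.betaIntegral (n:ℂ) ((1-α:ℝ):ℂ) :=
    Complex.Gamma_mul_Gamma_eq_betaIntegral (by simpa using hN0) (by simp; linarith)
  have hadd : ((n:ℂ) + ((1-α:ℝ):ℂ)) = (((n:ℝ) + 1 - α : ℝ) : ℂ) := by push_cast; ring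
  rw [hadd, ← hInt, Complex.Gamma_ofReal, Complex.Gamma_ofReal] at hBeta
  rw [show ((n:ℂ)) = (((n:ℝ)):ℂ) from rfl, Complex.Gamma_ofReal] at hBeta
  have hReal : Real.Gamma n * Real.Gamma (1-α) =
      Real.Gamma ((n:ℝ) + 1 - α) * ∫ t in (0:ℝ)..1, (1 - t) ^ (-α) * t ^ (n - 1) := by
    exact_mod_cast hBeta
  have hB : (∫ t in (0:ℝ)..1, (1 - t) ^ (-α) * t ^ (n - 1)) =
      Real.Gamma (1-α) * Real.Gamma n / Real.Gamma ((n:ℝ) + 1 - α) := by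
    field_simp
    linarith [hReal]
  constructor
  · rw [hB]; ring
  · rw [hB]
    -- log convexity
    have hconv := Real.convexOn_log_Gamma.2 (Set.mem_Ioi.2 hN0)
      (Set.mem_Ioi.2 (by linarith : (0:ℝ) < (n:ℝ)+1)) hα0.le (by linarith : (0:ℝ) ≤ 1 - α)
      (by ring)
    simp only [smul_eq_mul, Function.comp_apply] at hconv
    have heq : α * (n:ℝ) + (1 - α) * ((n:ℝ) + 1) = (n:ℝ) + 1 - α := by ring
    rw [heq] at hconv
    have hkey : Real.Gamma ((n:ℝ) + 1 - α) ≤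
        Real.Gamma n ^ α * Real.Gamma ((n:ℝ)+1) ^ (1-α) := by
      have := Real.exp_le_exp.2 hconv
      rw [Real.exp_log hGna, Real.exp_add] at this
      have e1 : Real.Gamma (n:ℝ) ^ α = Real.exp (α * Real.log (Real.Gamma n)) := by
        rw [Real.rpow_def_of_pos hGn, mul_comm]
      have e2 : Real.Gamma ((n:ℝ)+1) ^ (1-α) = Real.exp ((1-α) * Real.log (Real.Gamma ((n:ℝ)+1))) := by
        rw [Real.rpow_def_of_pos hGn1, mul_comm]
      rw [e1, e2]
      exact this
    -- main inequality: n^α * Γ(n+1-α) ≤ Γ(n+1)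
    have hmain : (n:ℝ)^α * Real.Gamma ((n:ℝ) + 1 - α) ≤ Real.Gamma ((n:ℝ)+1) := by
      calc (n:ℝ)^α * Real.Gamma ((n:ℝ) + 1 - α)
          ≤ (n:ℝ)^α * (Real.Gamma n ^ α * Real.Gamma ((n:ℝ)+1) ^ (1-α)) := by
            apply mul_le_mul_of_nonneg_left hkey (Real.rpow_nonneg hN0.le α)
        _ = Real.Gamma ((n:ℝ)+1) := by
            rw [hrec, Real.mul_rpow hN0.le hGn.le]
            rw [show ((n:ℝ)^α * (Real.Gamma n ^ α * ((n:ℝ)^(1-α) * Real.Gamma n ^ (1-α))))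
              = ((n:ℝ)^α * (n:ℝ)^(1-α)) * (Real.Gamma n ^ α * Real.Gamma n ^ (1-α)) by ring,
              ← Real.rpow_add hN0, ← Real.rpow_add hGn]
            norm_num
    rw [show (n:ℝ) * (Real.Gamma (1-α) * Real.Gamma n / Real.Gamma ((n:ℝ)+1-α))
      = Real.Gamma (1-α) * (((n:ℝ) * Real.Gamma n) / Real.Gamma ((n:ℝ)+1-α)) by ring, ← hrec]
    apply mul_le_mul_of_nonneg_left _ hGa.le
    rw [le_div_iff₀ hGna]
    exact hmain
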